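/- Let n ≥ 4 be a composite integer. The Laplacian spectral radius of Γ(Z_n) equals the number of vertices of Γ(Z_n) if and only if n is a product of two distinct primes, or n is a prime power with n ≠ 4. -/

import Mathlib

open scoped BigOperators

/-- Vertex set of the zero divisor graph of `ZMod n`: the nonzero zero divisors. -/
abbrev ZdVert (n : ℕ) : Type :=
  {x : ZMod n // x ≠ 0 ∧ ∃ y : ZMod n, y ≠ 0 ∧ x * y = 0}

/-- The zero divisor graph `Γ(ZMod n)`: vertices are the nonzero zero divisors, and two
distinct vertices are adjacent iff their product is zero. -/
def zdGraph (n : ℕ) : SimpleGraph (ZdVert n) where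
  Adj a b := a ≠ b ∧ (a : ZMod n) * (b : ZMod n) = 0
  symm := ⟨by
    rintro a b ⟨hne, h⟩
    exact ⟨hne.symm, by rwa [mul_comm]⟩⟩
  loopless := ⟨fun a h => h.1 rfl⟩

instance (n : ℕ) : DecidableRel (zdGraph n).Adj :=
  fun a b => inferInstanceAs (Decidable (a ≠ b ∧ (a : ZMod n) * (b : ZMod n) = 0))

instance (n : ℕ) (s : Set (ZdVert n)) [DecidablePred (· ∈ s)] :
    DecidableRel ((zdGraph n).induce s).Adj :=
  fun a b => inferInstanceAs (Decidable ((zdGraph n).Adj a b))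

/-- The set `A_d = {x ∈ ZMod n : gcd(x, n) = d}`, viewed inside the vertex set of the
zero divisor graph. -/
def fiberSet (n : ℕ) (d : ℕ) : Set (ZdVert n) :=
  {v | Nat.gcd (v : ZMod n).val n = d}

instance (n d : ℕ) : DecidablePred (· ∈ fiberSet n d) :=
  fun v => inferInstanceAs (Decidable (Nat.gcd (v : ZMod n).val n = d))

/-- The multiset of Laplacian eigenvalues (roots of the characteristic polynomial of the
Laplacian matrix, counted with multiplicity) of a finite graph. -/
noncomputable def lapEigs {V : Type*} [Fintype V] [DecidableEq V] (G : SimpleGraph V)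
    [DecidableRel G.Adj] : Multiset ℝ :=
  (G.lapMatrix ℝ).charpoly.roots

/-- The algebraic connectivity `μ(G)`: the second smallest Laplacian eigenvalue. -/
noncomputable def algConn {V : Type*} [Fintype V] [DecidableEq V] (G : SimpleGraph V)
    [DecidableRel G.Adj] : ℝ :=
  ((lapEigs G).sort (· ≤ ·)).getD 1 (Fintype.card V)

/-- The Laplacian spectral radius `λ(G)`: the largest Laplacian eigenvalue. -/
noncomputable def lapRadius {V : Type*} [Fintype V] [DecidableEq V] (G : SimpleGraph V)
    [DecidableRel G.Adj] : ℝ :=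
  ((lapEigs G).sort (· ≤ ·)).getD (Fintype.card V - 1) 0



section Spectral

open Matrix Polynomial

variable {V : Type*} [Fintype V] [DecidableEq V]

lemma my_charpoly_conj (P Q A : Matrix V V ℝ) (h1 : P * Q = 1) :
    (P * A * Q).charpoly = A.charpoly := by
  have h2 : Q * P = 1 := mul_eq_one_comm.mp h1
  have hPQ : (P.map (C : ℝ →+* ℝ[X])) * (Q.map C) = 1 := by
    rw [← Matrix.map_mul, h1, Matrix.map_one _ (map_zero C) (map_one C)]
  have hQP : (Q.map (C : ℝ →+* ℝ[X])) * (P.map C) = 1 := by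
    rw [← Matrix.map_mul, h2, Matrix.map_one _ (map_zero C) (map_one C)]
  have key : charmatrix (P * A * Q) = (P.map C) * charmatrix A * (Q.map C) := by
    unfold charmatrix
    have hmap : (C : ℝ →+* ℝ[X]).mapMatrix (P * A * Q)
        = (P.map C) * ((C : ℝ →+* ℝ[X]).mapMatrix A) * (Q.map C) := by
      simp only [RingHom.mapMatrix_apply, Matrix.map_mul]
    rw [Matrix.mul_sub, Matrix.sub_mul, hmap]
    congr 1
    have hcomm : (P.map (C : ℝ →+* ℝ[X])) * Matrix.scalar V (X : ℝ[X])
        = Matrix.scalar V (X : ℝ[X]) * (P.map C) :=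
      (Matrix.scalar_commute (X : ℝ[X]) (fun r => Commute.all _ _) (P.map C)).symm
    rw [hcomm, mul_assoc, hPQ, mul_one]
  unfold Matrix.charpoly
  rw [key, det_mul, det_mul, mul_comm, ← mul_assoc, ← det_mul, hQP, det_one, one_mul]

lemma my_charpoly_diagonal (d : V → ℝ) :
    (Matrix.diagonal d).charpoly = ∏ i, (X - C (d i)) := by
  have : charmatrix (Matrix.diagonal d) = Matrix.diagonal (fun i => X - C (d i)) := by
    ext i j
    by_cases h : i = j
    · subst h; simp
    · simp [charmatrix_apply_ne _ _ _ h, Matrix.diagonal_apply_ne _ h,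
        Matrix.diagonal_apply_ne d h]
  rw [Matrix.charpoly, this, det_diagonal]

lemma my_charpoly_hermitian (A : Matrix V V ℝ) (hA : A.IsHermitian) :
    A.charpoly = ∏ i, (X - C (hA.eigenvalues i)) := by
  have h1 : (hA.eigenvectorUnitary : Matrix V V ℝ) * star (hA.eigenvectorUnitary : Matrix V V ℝ)
      = 1 := Unitary.mul_star_self_of_mem hA.eigenvectorUnitary.2
  have hd : (RCLike.ofReal ∘ hA.eigenvalues : V → ℝ) = hA.eigenvalues := by
    funext i; simp [RCLike.ofReal]
  calc A.charpoly
      = ((hA.eigenvectorUnitary : Matrix V V ℝ) * Matrix.diagonal (RCLike.ofReal ∘ hA.eigenvalues)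
          * star (hA.eigenvectorUnitary : Matrix V V ℝ)).charpoly := by
        conv_lhs => rw [hA.spectral_theorem, Unitary.conjStarAlgAut_apply]
    _ = (Matrix.diagonal (RCLike.ofReal ∘ hA.eigenvalues)).charpoly := my_charpoly_conj _ _ _ h1
    _ = ∏ i, (X - C (hA.eigenvalues i)) := by rw [hd, my_charpoly_diagonal]

end Spectral
section LemA
open Matrix Polynomial

variable {V : Type*} [Fintype V] [DecidableEq V]

lemma lapEigs_eq (G : SimpleGraph V) [DecidableRel G.Adj] :
    lapEigs G = Finset.univ.val.map (G.posSemidef_lapMatrix ℝ).1.eigenvalues := by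
  unfold lapEigs
  rw [my_charpoly_hermitian _ (G.posSemidef_lapMatrix ℝ).1]
  rw [show (∏ i, (X - C ((G.posSemidef_lapMatrix ℝ).1.eigenvalues i)))
      = ((Finset.univ.val.map (G.posSemidef_lapMatrix ℝ).1.eigenvalues).map
          (fun a => X - C a)).prod by
    rw [Multiset.map_map]; rfl]
  exact roots_multiset_prod_X_sub_C _

lemma card_lapEigs (G : SimpleGraph V) [DecidableRel G.Adj] :
    Multiset.card (lapEigs G) = Fintype.card V := by
  rw [lapEigs_eq, Multiset.card_map]; rfl

lemma mem_lapEigs_iff (G : SimpleGraph V) [DecidableRel G.Adj] {t : ℝ} :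
    t ∈ lapEigs G ↔ ∃ i, (G.posSemidef_lapMatrix ℝ).1.eigenvalues i = t := by
  rw [lapEigs_eq, Multiset.mem_map]
  constructor
  · rintro ⟨i, _, h⟩; exact ⟨i, h⟩
  · rintro ⟨i, h⟩; exact ⟨i, Finset.mem_univ_val i, h⟩

end LemA
section LemB
open Matrix Polynomial SimpleGraph

variable {V : Type*} [Fintype V] [DecidableEq V]

lemma neighbor_union_compl (G : SimpleGraph V) [DecidableRel G.Adj] (v : V) :
    G.neighborFinset v ∪ Gᶜ.neighborFinset v = Finset.univ.erase v := by
  ext z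
  simp only [Finset.mem_union, SimpleGraph.mem_neighborFinset, SimpleGraph.compl_adj,
    Finset.mem_erase, Finset.mem_univ, and_true]
  constructor
  · rintro (h | ⟨hne, _⟩)
    · exact (G.ne_of_adj h).symm
    · exact Ne.symm hne
  · intro hz
    by_cases hadj : G.Adj v z
    · exact Or.inl hadj
    · exact Or.inr ⟨Ne.symm hz, hadj⟩

lemma neighbor_disjoint_compl (G : SimpleGraph V) [DecidableRel G.Adj] (v : V) :
    Disjoint (G.neighborFinset v) (Gᶜ.neighborFinset v) := by
  rw [Finset.disjoint_left]
  intro z hz hz'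
  rw [SimpleGraph.mem_neighborFinset] at hz hz'
  exact hz'.2 hz

lemma lap_compl_identity (G : SimpleGraph V) [DecidableRel G.Adj] (x : V → ℝ) (v : V) :
    (G.lapMatrix ℝ *ᵥ x) v + (Gᶜ.lapMatrix ℝ *ᵥ x) v
      = (Fintype.card V : ℝ) * x v - (∑ i, x i) := by
  have hNpos : 0 < Fintype.card V := Fintype.card_pos_iff.mpr ⟨v⟩
  rw [SimpleGraph.lapMatrix_mulVec_apply, SimpleGraph.lapMatrix_mulVec_apply]
  have hdeg : (G.degree v : ℝ) + (Gᶜ.degree v : ℝ) = (Fintype.card V : ℝ) - 1 := by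
    have : G.degree v + Gᶜ.degree v = Fintype.card V - 1 := by
      rw [SimpleGraph.degree, SimpleGraph.degree,
        ← Finset.card_union_of_disjoint (neighbor_disjoint_compl G v), neighbor_union_compl,
        Finset.card_erase_of_mem (Finset.mem_univ v), Finset.card_univ]
    calc (G.degree v : ℝ) + (Gᶜ.degree v : ℝ)
        = ((G.degree v + Gᶜ.degree v : ℕ) : ℝ) := by push_cast; ring
      _ = ((Fintype.card V - 1 : ℕ) : ℝ) := by rw [this]
      _ = (Fintype.card V : ℝ) - 1 := by rw [Nat.cast_sub hNpos]; simp
  have hsum : (∑ u ∈ G.neighborFinset v, x u) + (∑ u ∈ Gᶜ.neighborFinset v, x u)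
      = (∑ i, x i) - x v := by
    rw [← Finset.sum_union (neighbor_disjoint_compl G v), neighbor_union_compl,
      Finset.sum_erase_eq_sub (Finset.mem_univ v)]
  linear_combination x v * hdeg - hsum

lemma dot_self_pos {x : V → ℝ} (hx : x ≠ 0) : 0 < x ⬝ᵥ x := by
  rcases lt_or_eq_of_le (Finset.sum_nonneg fun i _ => mul_self_nonneg (x i)) with h | h
  · exact h
  · exact absurd (dotProduct_self_eq_zero.mp h.symm) hx

lemma dot_ones (x : V → ℝ) : x ⬝ᵥ (fun _ => (1:ℝ)) = ∑ i, x i := by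
  simp [dotProduct]

variable [Nonempty V]

lemma eig_le_card (G : SimpleGraph V) [DecidableRel G.Adj] (i : V) :
    (G.posSemidef_lapMatrix ℝ).1.eigenvalues i ≤ (Fintype.card V : ℝ) := by
  set hA := (G.posSemidef_lapMatrix ℝ).1
  set μ := hA.eigenvalues i
  set v : V → ℝ := ⇑(hA.eigenvectorBasis i)
  have hv : G.lapMatrix ℝ *ᵥ v = μ • v := hA.mulVec_eigenvectorBasis i
  have hvne : v ≠ 0 := by
    intro h
    exact hA.eigenvectorBasis.toBasis.ne_zero i (by ext j; exact congrFun h j)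
  have hpsd := (Gᶜ.posSemidef_lapMatrix ℝ).dotProduct_mulVec_nonneg v
  simp only [star_trivial] at hpsd
  have hid : ∀ w, (Gᶜ.lapMatrix ℝ *ᵥ v) w
      = (Fintype.card V : ℝ) * v w - (∑ i, v i) - μ * v w := by
    intro w
    have h1 := lap_compl_identity G v w
    rw [hv] at h1
    simp only [Pi.smul_apply, smul_eq_mul] at h1
    linarith
  have hvec : Gᶜ.lapMatrix ℝ *ᵥ v
      = (Fintype.card V : ℝ) • v - (∑ i, v i) • (fun _ => (1:ℝ)) - μ • v := by
    funext w
    have := hid w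
    simp only [Pi.sub_apply, Pi.smul_apply, smul_eq_mul, mul_one]
    linarith
  have hdot : v ⬝ᵥ (Gᶜ.lapMatrix ℝ *ᵥ v)
      = (Fintype.card V : ℝ) * (v ⬝ᵥ v) - (∑ i, v i)^2 - μ * (v ⬝ᵥ v) := by
    rw [hvec, dotProduct_sub, dotProduct_sub, dotProduct_smul,
      dotProduct_smul, dotProduct_smul, dot_ones]
    simp only [smul_eq_mul]
    ring
  have hvv : 0 < v ⬝ᵥ v := dot_self_pos hvne
  nlinarith [sq_nonneg (∑ i, v i)]

end LemB
section LemC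
open Matrix Polynomial SimpleGraph

variable {V : Type*} [Fintype V] [DecidableEq V] [Nonempty V]

lemma card_mem_lapEigs_of_not_connected (G : SimpleGraph V) [DecidableRel G.Adj]
    (h : ¬ Gᶜ.Connected) : (Fintype.card V : ℝ) ∈ lapEigs G := by
  classical
  have hpre : ¬ Gᶜ.Preconnected := fun hp => h ⟨hp⟩
  rw [SimpleGraph.Preconnected] at hpre
  push_neg at hpre
  obtain ⟨u, w, hnr⟩ := hpre
  set S : Finset V := Finset.univ.filter (fun z => Gᶜ.Reachable u z) with hS
  set T : Finset V := Finset.univ.filter (fun z => ¬ Gᶜ.Reachable u z) with hT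
  set x : V → ℝ := fun z => if Gᶜ.Reachable u z then (T.card : ℝ) else -(S.card : ℝ) with hxdef
  have hconst : ∀ i j, Gᶜ.Reachable i j → x i = x j := by
    intro i j hij
    simp only [hxdef]
    have : Gᶜ.Reachable u i ↔ Gᶜ.Reachable u j :=
      ⟨fun h' => h'.trans hij, fun h' => h'.trans hij.symm⟩
    by_cases hui : Gᶜ.Reachable u i
    · rw [if_pos hui, if_pos (this.mp hui)]
    · rw [if_neg hui, if_neg (fun h' => hui (this.mpr h'))]
  have hker : Gᶜ.lapMatrix ℝ *ᵥ x = 0 := by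
    have := (Gᶜ.lapMatrix_mulVec_eq_zero_iff_forall_reachable (x := x)).mpr hconst
    exact this
  have hsum : ∑ i, x i = 0 := by
    rw [← Finset.sum_filter_add_sum_filter_not Finset.univ (fun z => Gᶜ.Reachable u z)]
    have h1 : ∑ i ∈ S, x i = (S.card : ℝ) * (T.card : ℝ) := by
      have hc : ∀ i ∈ S, x i = (T.card : ℝ) :=
        fun i hi => if_pos (Finset.mem_filter.mp hi).2
      rw [Finset.sum_congr rfl hc, Finset.sum_const, nsmul_eq_mul]
    have h2 : ∑ i ∈ T, x i = -((T.card : ℝ) * (S.card : ℝ)) := by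
      have hc : ∀ i ∈ T, x i = -(S.card : ℝ) :=
        fun i hi => if_neg (Finset.mem_filter.mp hi).2
      rw [Finset.sum_congr rfl hc, Finset.sum_const, nsmul_eq_mul]
      ring
    rw [← hS, ← hT, h1, h2]; ring
  have heig : G.lapMatrix ℝ *ᵥ x = (Fintype.card V : ℝ) • x := by
    funext v
    have h1 := lap_compl_identity G x v
    rw [hker] at h1
    simp only [Pi.zero_apply, Pi.smul_apply, smul_eq_mul] at h1 ⊢
    rw [hsum] at h1
    linarith
  have hxne : x ≠ 0 := by
    intro h0
    have hu : x u = (T.card : ℝ) := if_pos (SimpleGraph.Reachable.refl u)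
    have hTpos : 0 < T.card := Finset.card_pos.mpr ⟨w, Finset.mem_filter.mpr ⟨Finset.mem_univ w, hnr⟩⟩
    rw [h0] at hu
    simp only [Pi.zero_apply] at hu
    exact absurd hu.symm (by positivity)
  -- now show card is an eigenvalue
  rw [mem_lapEigs_iff]
  by_contra hno
  push_neg at hno
  set hA := (G.posSemidef_lapMatrix ℝ).1
  set U : Matrix V V ℝ := (hA.eigenvectorUnitary : Matrix V V ℝ) with hU
  have h1 : U * star U = 1 := Unitary.mul_star_self_of_mem hA.eigenvectorUnitary.2
  have hd : (RCLike.ofReal ∘ hA.eigenvalues : V → ℝ) = hA.eigenvalues := by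
    funext i; simp [RCLike.ofReal]
  set M : Matrix V V ℝ := (Fintype.card V : ℝ) • 1 - G.lapMatrix ℝ with hM
  have hMeq : M = U * ((Fintype.card V : ℝ) • 1 - Matrix.diagonal hA.eigenvalues) * star U := by
    rw [Matrix.mul_sub, Matrix.sub_mul, hM]
    congr 1
    · rw [Matrix.mul_smul, mul_one, Matrix.smul_mul, h1]
    · conv_lhs => rw [hA.spectral_theorem]
      rw [hd, Unitary.conjStarAlgAut_apply, hU]
  have hdet : M.det ≠ 0 := by
    rw [hMeq, Matrix.det_mul, Matrix.det_mul, mul_comm, ← mul_assoc, ← Matrix.det_mul,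
      mul_eq_one_comm.mp h1, Matrix.det_one, one_mul]
    have : (Fintype.card V : ℝ) • (1 : Matrix V V ℝ) - Matrix.diagonal hA.eigenvalues
        = Matrix.diagonal (fun i => (Fintype.card V : ℝ) - hA.eigenvalues i) := by
      rw [Matrix.smul_one_eq_diagonal, Matrix.diagonal_sub]
    rw [this, Matrix.det_diagonal]
    apply Finset.prod_ne_zero_iff.mpr
    intro i _
    exact sub_ne_zero_of_ne (fun hc => hno i hc.symm)
  have hMx : M *ᵥ x = 0 := by
    rw [hM, Matrix.sub_mulVec, Matrix.smul_mulVec, Matrix.one_mulVec, heig, sub_self]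
  exact hxne (Matrix.eq_zero_of_mulVec_eq_zero hdet hMx)

lemma not_connected_of_card_mem_lapEigs (G : SimpleGraph V) [DecidableRel G.Adj]
    (h : (Fintype.card V : ℝ) ∈ lapEigs G) : ¬ Gᶜ.Connected := by
  classical
  rw [mem_lapEigs_iff] at h
  obtain ⟨i, hi⟩ := h
  set hA := (G.posSemidef_lapMatrix ℝ).1
  set x : V → ℝ := ⇑(hA.eigenvectorBasis i) with hxdef
  have hv : G.lapMatrix ℝ *ᵥ x = (Fintype.card V : ℝ) • x := by
    have := hA.mulVec_eigenvectorBasis i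
    rwa [hi] at this
  have hxne : x ≠ 0 := by
    intro h
    exact hA.eigenvectorBasis.toBasis.ne_zero i (by ext j; exact congrFun h j)
  have hid : ∀ w, (Gᶜ.lapMatrix ℝ *ᵥ x) w = -(∑ i, x i) := by
    intro w
    have h1 := lap_compl_identity G x w
    rw [hv] at h1
    simp only [Pi.smul_apply, smul_eq_mul] at h1
    linarith
  have hpsd := (Gᶜ.posSemidef_lapMatrix ℝ).dotProduct_mulVec_nonneg x
  simp only [star_trivial] at hpsd
  have hdot : x ⬝ᵥ (Gᶜ.lapMatrix ℝ *ᵥ x) = -(∑ i, x i)^2 := by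
    unfold dotProduct
    rw [Finset.sum_congr rfl fun w _ => by rw [hid w]]
    rw [← Finset.sum_mul]
    ring
  have hsum : ∑ i, x i = 0 := by
    nlinarith [hpsd, hdot, sq_nonneg (∑ i, x i)]
  have hker : Gᶜ.lapMatrix ℝ *ᵥ x = 0 := by
    funext w; rw [hid w, hsum]; simp
  have hconst := (Gᶜ.lapMatrix_mulVec_eq_zero_iff_forall_reachable (x := x)).mp
    (by exact hker)
  intro hconn
  obtain ⟨v0⟩ := ‹Nonempty V›
  have hxc : ∀ w, x w = x v0 := fun w => hconst w v0 (hconn.preconnected w v0)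
  have : ∑ i, x i = (Fintype.card V : ℝ) * x v0 := by
    rw [Finset.sum_congr rfl fun w _ => hxc w, Finset.sum_const, nsmul_eq_mul, Finset.card_univ]
  rw [hsum] at this
  have hN : (0:ℝ) < (Fintype.card V : ℝ) := by
    exact_mod_cast Fintype.card_pos
  have hx0 : x v0 = 0 := by
    rcases mul_eq_zero.mp this.symm with h | h
    · linarith
    · exact h
  exact hxne (funext fun w => by rw [hxc w, hx0]; rfl)

end LemC
section LemD
open Matrix Polynomial SimpleGraph

variable {V : Type*} [Fintype V] [DecidableEq V] [Nonempty V]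

lemma lapRadius_mem_max (G : SimpleGraph V) [DecidableRel G.Adj] :
    lapRadius G ∈ lapEigs G ∧ ∀ y ∈ lapEigs G, y ≤ lapRadius G := by
  classical
  set l : List ℝ := (lapEigs G).sort (· ≤ ·) with hl
  have hlen : l.length = Fintype.card V := by
    rw [hl, Multiset.length_sort, card_lapEigs]
  have hpos : 0 < l.length := by rw [hlen]; exact Fintype.card_pos
  have hidx : Fintype.card V - 1 < l.length := by omega
  have hget : lapRadius G = l.get ⟨Fintype.card V - 1, hidx⟩ := by
    rw [lapRadius, ← hl]; exact List.getD_eq_get l 0 ⟨_, hidx⟩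
  constructor
  · rw [hget, ← Multiset.mem_sort (s := lapEigs G) (r := (· ≤ ·)), ← hl]
    exact List.mem_iff_get.mpr ⟨_, rfl⟩
  · intro y hy
    rw [← Multiset.mem_sort (s := lapEigs G) (r := (· ≤ ·)), ← hl] at hy
    obtain ⟨i, hi⟩ := List.mem_iff_get.mp hy
    rw [hget, ← hi]
    have hsorted : l.Pairwise (· ≤ ·) := Multiset.pairwise_sort ..
    rcases lt_or_eq_of_le (Nat.le_sub_one_of_lt (hlen ▸ i.2) : (i : ℕ) ≤ Fintype.card V - 1)
      with hlt | heq
    · exact hsorted.rel_get_of_lt (by simpa [Fin.lt_def] using hlt)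
    · apply le_of_eq; congr 1; exact Fin.ext heq

lemma lapRadius_eq_card_iff_not_connected (G : SimpleGraph V) [DecidableRel G.Adj] :
    lapRadius G = (Fintype.card V : ℝ) ↔ ¬ Gᶜ.Connected := by
  obtain ⟨hmem, hmax⟩ := lapRadius_mem_max G
  constructor
  · intro h
    apply not_connected_of_card_mem_lapEigs
    rwa [h] at hmem
  · intro h
    have hN := card_mem_lapEigs_of_not_connected G h
    have h1 : (Fintype.card V : ℝ) ≤ lapRadius G := hmax _ hN
    have h2 : lapRadius G ≤ (Fintype.card V : ℝ) := by
      obtain ⟨i, hi⟩ := (mem_lapEigs_iff G).mp hmem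
      rw [← hi]
      exact eig_le_card G i
    linarith

end LemD

section ZD

variable {n : ℕ} [NeZero n]

lemma zmod_cast_ne_zero {m : ℕ} (h1 : 0 < m) (h2 : m < n) : (m : ZMod n) ≠ 0 := by
  rw [Ne, ZMod.natCast_eq_zero_iff]
  intro hdvd
  exact absurd (Nat.le_of_dvd h1 hdvd) (not_le.mpr h2)

lemma zmod_mul_eq_zero_iff (a b : ZMod n) : a * b = 0 ↔ n ∣ a.val * b.val := by
  conv_lhs => rw [← ZMod.natCast_zmod_val a, ← ZMod.natCast_zmod_val b]
  rw [← Nat.cast_mul, ZMod.natCast_eq_zero_iff]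

/-- build a vertex of the zero divisor graph from a natural number -/
def mkVert (m : ℕ) (h1 : 0 < m) (h2 : m < n) (h3 : Nat.gcd m n ≠ 1) : ZdVert n := by
  refine ⟨(m : ZMod n), zmod_cast_ne_zero h1 h2, ((n / Nat.gcd m n : ℕ) : ZMod n), ?_, ?_⟩
  · have hnpos : 0 < n := Nat.pos_of_ne_zero (NeZero.ne n)
    have hgpos : 0 < Nat.gcd m n := Nat.gcd_pos_of_pos_right m hnpos
    have hg1 : 1 < Nat.gcd m n := lt_of_le_of_ne hgpos (fun h => h3 h.symm)
    exact zmod_cast_ne_zero (Nat.div_pos (Nat.le_of_dvd hnpos (Nat.gcd_dvd_right m n)) hgpos)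
      (Nat.div_lt_self hnpos hg1)
  · rw [← Nat.cast_mul, ZMod.natCast_eq_zero_iff]
    obtain ⟨c, hc⟩ := Nat.gcd_dvd_left m n
    have : m * (n / Nat.gcd m n) = c * n := by
      calc m * (n / Nat.gcd m n) = c * (Nat.gcd m n * (n / Nat.gcd m n)) := by nth_rewrite 1 [hc]; ring
        _ = c * n := by rw [Nat.mul_div_cancel' (Nat.gcd_dvd_right m n)]
    rw [this]
    exact Dvd.intro_left _ rfl

lemma mkVert_coe (m : ℕ) (h1 : 0 < m) (h2 : m < n) (h3 : Nat.gcd m n ≠ 1) :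
    ((mkVert m h1 h2 h3 : ZdVert n) : ZMod n) = (m : ZMod n) := rfl

lemma mkVert_val (m : ℕ) (h1 : 0 < m) (h2 : m < n) (h3 : Nat.gcd m n ≠ 1) :
    ((mkVert m h1 h2 h3 : ZdVert n) : ZMod n).val = m := ZMod.val_cast_of_lt h2

lemma vert_gcd_ne_one (v : ZdVert n) : Nat.gcd (v : ZMod n).val n ≠ 1 := by
  intro h
  obtain ⟨hne, y, hy, hxy⟩ := v.2
  have hu : IsUnit (v : ZMod n) := by
    rw [← ZMod.natCast_zmod_val (v : ZMod n)]
    exact (ZMod.isUnit_iff_coprime _ n).mpr h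
  exact hy (hu.mul_right_eq_zero.mp hxy)

lemma vert_val_pos (v : ZdVert n) : 0 < (v : ZMod n).val := by
  rcases Nat.eq_zero_or_pos (v : ZMod n).val with h | h
  · exact absurd ((ZMod.val_eq_zero _).mp h) v.2.1
  · exact h

lemma vert_prime_dvd (v : ZdVert n) :
    ∃ r : ℕ, r.Prime ∧ r ∣ (v : ZMod n).val ∧ r ∣ n := by
  have hg := vert_gcd_ne_one v
  refine ⟨(Nat.gcd (v : ZMod n).val n).minFac, Nat.minFac_prime hg, ?_, ?_⟩
  · exact dvd_trans (Nat.minFac_dvd _) (Nat.gcd_dvd_left _ _)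
  · exact dvd_trans (Nat.minFac_dvd _) (Nat.gcd_dvd_right _ _)

end ZD

section Graphs

variable {n : ℕ} [NeZero n]

lemma zdGraph_adj_iff' {a b : ZdVert n} :
    (zdGraph n).Adj a b ↔ a ≠ b ∧ (a : ZMod n) * (b : ZMod n) = 0 := Iff.rfl

lemma not_connected_compl_of_pq {p q : ℕ} (hp : p.Prime) (hq : q.Prime) (hne : p ≠ q)
    (hn : n = p * q) : ¬ ((zdGraph n)ᶜ).Connected := by
  intro hconn
  have hq1 : 1 < q := hq.one_lt
  have hp1 : 1 < p := hp.one_lt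
  have hplt : p < n := by rw [hn]; nlinarith
  have hqlt : q < n := by rw [hn]; nlinarith
  have hpdvd : p ∣ n := hn ▸ Dvd.intro q rfl
  have hqdvd : q ∣ n := hn ▸ Dvd.intro_left p rfl
  set pv : ZdVert n := mkVert p hp.pos hplt
    (by rw [Nat.gcd_eq_left hpdvd]; exact hp.ne_one) with hpv
  set qv : ZdVert n := mkVert q hq.pos hqlt
    (by rw [Nat.gcd_eq_left hqdvd]; exact hq.ne_one) with hqv
  have key : ∀ a b : ZdVert n, ((zdGraph n)ᶜ).Adj a b →
      (p ∣ (a : ZMod n).val → p ∣ (b : ZMod n).val) := by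
    intro a b hadj hpa
    rw [SimpleGraph.compl_adj] at hadj
    obtain ⟨hab, hnadj⟩ := hadj
    have hprod : (a : ZMod n) * (b : ZMod n) ≠ 0 := fun h => hnadj (zdGraph_adj_iff'.mpr ⟨hab, h⟩)
    by_contra hpb
    obtain ⟨r, hr, hrb, hrn⟩ := vert_prime_dvd b
    have : r = p ∨ r = q := by
      rw [hn] at hrn
      rcases (Nat.Prime.dvd_mul hr).mp hrn with h | h
      · exact Or.inl ((Nat.prime_dvd_prime_iff_eq hr hp).mp h)
      · exact Or.inr ((Nat.prime_dvd_prime_iff_eq hr hq).mp h)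
    rcases this with h | h
    · exact hpb (h ▸ hrb)
    · apply hprod
      rw [zmod_mul_eq_zero_iff]
      have hdd : p * q ∣ (a : ZMod n).val * (b : ZMod n).val :=
        Nat.mul_dvd_mul hpa (h ▸ hrb)
      rwa [← hn] at hdd
  have hreach : ∀ a b : ZdVert n, ((zdGraph n)ᶜ).Reachable a b →
      (p ∣ (a : ZMod n).val → p ∣ (b : ZMod n).val) := by
    intro a b hab
    obtain ⟨w⟩ := hab
    induction w with
    | nil => exact id
    | cons h _ ih => exact fun ha => ih (key _ _ h ha)
  have h1 : p ∣ (pv : ZMod n).val := by rw [hpv, mkVert_val]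
  have h2 := hreach pv qv (hconn.preconnected pv qv) h1
  rw [hqv, mkVert_val] at h2
  exact hne ((Nat.prime_dvd_prime_iff_eq hp hq).mp h2)

lemma vert_p_dvd_of_pp {p k : ℕ} (hp : p.Prime) (hk : 2 ≤ k) (hn : n = p ^ k)
    (y : ZdVert n) : p ∣ (y : ZMod n).val := by
  obtain ⟨r, hr, hry, hrn⟩ := vert_prime_dvd y
  have : r = p := by
    rw [hn] at hrn
    exact (Nat.prime_dvd_prime_iff_eq hr hp).mp (hr.dvd_of_dvd_pow hrn)
  exact this ▸ hry

lemma not_connected_compl_of_pp {p k : ℕ} (hp : p.Prime) (hk : 2 ≤ k) (hn : n = p ^ k)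
    (h4 : n ≠ 4) : ¬ ((zdGraph n)ᶜ).Connected := by
  intro hconn
  have hp1 : 1 < p := hp.one_lt
  have hppos : 0 < p ^ (k - 1) := pow_pos hp.pos _
  have hplt : p ^ (k - 1) < n := by
    rw [hn]
    exact Nat.pow_lt_pow_right hp1 (by omega)
  have hpdvd : p ^ (k - 1) ∣ n := by
    rw [hn]; exact pow_dvd_pow p (by omega)
  have hgcd : Nat.gcd (p ^ (k - 1)) n ≠ 1 := by
    rw [Nat.gcd_eq_left hpdvd]
    exact fun h => (Nat.one_lt_pow (by omega) hp1).ne' h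
  set z : ZdVert n := mkVert (p ^ (k - 1)) hppos hplt hgcd with hz
  -- find a second vertex w ≠ z
  obtain ⟨m, hm0, hmlt, hmgcd, hmne⟩ :
      ∃ m : ℕ, 0 < m ∧ m < n ∧ Nat.gcd m n ≠ 1 ∧ m ≠ p ^ (k - 1) := by
    by_cases hk2 : k = 2
    · -- n = p^2 with p ≥ 3
      have hp3 : 3 ≤ p := by
        rcases Nat.lt_or_ge p 3 with h | h
        · exfalso
          have hp2 : p = 2 := by omega
          apply h4
          rw [hn, hk2, hp2]
          norm_num
        · exact h
      refine ⟨2 * p, by omega, ?_, ?_, ?_⟩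
      · rw [hn, hk2]; nlinarith
      · have hdg : p ∣ Nat.gcd (2 * p) n :=
          Nat.dvd_gcd (dvd_mul_left p 2) (by rw [hn]; exact dvd_pow_self p (by omega))
        intro h
        rw [h] at hdg
        exact hp.ne_one (Nat.dvd_one.mp hdg)
      · intro hcon
        rw [hk2] at hcon
        norm_num at hcon
        omega
    · refine ⟨p, hp.pos, ?_, ?_, ?_⟩
      · rw [hn]
        calc p = p ^ 1 := (pow_one p).symm
          _ < p ^ k := Nat.pow_lt_pow_right hp1 (by omega)
      · rw [Nat.gcd_eq_left (by rw [hn]; exact dvd_pow_self p (by omega))]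
        exact hp.ne_one
      · intro h
        have hlt2 : p < p ^ (k - 1) := by
          calc p = p ^ 1 := (pow_one p).symm
            _ < p ^ (k - 1) := Nat.pow_lt_pow_right hp1 (by omega)
        omega
  set w : ZdVert n := mkVert m hm0 hmlt hmgcd with hw
  have hwz : w ≠ z := by
    intro h
    apply hmne
    have := congrArg (fun v : ZdVert n => ((v : ZMod n)).val) h
    simpa [hw, hz, mkVert_val] using this
  have hiso : ∀ y : ZdVert n, ¬ ((zdGraph n)ᶜ).Adj z y := by
    intro y hadj
    rw [SimpleGraph.compl_adj] at hadj
    obtain ⟨hzy, hnadj⟩ := hadj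
    apply hnadj
    refine ⟨hzy, ?_⟩
    rw [zmod_mul_eq_zero_iff]
    obtain ⟨t, ht⟩ := vert_p_dvd_of_pp hp hk hn y
    rw [hz, mkVert_val, ht, hn]
    have : p ^ (k - 1) * (p * t) = p ^ k * t := by
      rw [← mul_assoc, ← pow_succ]
      congr 2
      omega
    rw [this]
    exact Dvd.intro t rfl
  have hfix : ∀ a : ZdVert n, ((zdGraph n)ᶜ).Reachable z a → z = a := by
    intro a h
    obtain ⟨wk⟩ := h
    cases wk with
    | nil => rfl
    | cons h _ => exact absurd h (hiso _)
  exact hwz (hfix w (hconn.preconnected z w)).symm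

lemma connected_compl_four : ((zdGraph 4)ᶜ).Connected := by
  have hall : ∀ v : ZdVert 4, (v : ZMod 4) = 2 := by
    rintro ⟨x, hx0, y, hy0, hxy⟩
    revert hx0 hy0 hxy
    revert x y
    decide
  rw [SimpleGraph.connected_iff]
  constructor
  · intro u v
    have : u = v := Subtype.ext (by rw [hall u, hall v])
    rw [this]
  · exact ⟨⟨(2 : ZMod 4), by decide⟩⟩

lemma connected_compl_general {p q : ℕ} (hp : p.Prime) (hq : q.Prime)
    (hpq : p ≠ q) (hpn : p ∣ n) (hqn : q ∣ n) (hne : n ≠ p * q) :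
    ((zdGraph n)ᶜ).Connected := by
  have hnpos : 0 < n := Nat.pos_of_ne_zero (NeZero.ne n)
  have hpqdvd : p * q ∣ n := (Nat.coprime_primes hp hq).mpr hpq |>.mul_dvd_of_dvd_of_dvd hpn hqn
  have hpqlt : p * q < n := lt_of_le_of_ne (Nat.le_of_dvd hnpos hpqdvd) (Ne.symm hne)
  have hplt : p < n := by nlinarith [hp.one_lt, hq.one_lt]
  have hqlt : q < n := by nlinarith [hp.one_lt, hq.one_lt]
  set pv : ZdVert n := mkVert p hp.pos hplt
    (by rw [Nat.gcd_eq_left hpn]; exact hp.ne_one) with hpv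
  set qv : ZdVert n := mkVert q hq.pos hqlt
    (by rw [Nat.gcd_eq_left hqn]; exact hq.ne_one) with hqv
  have hqplt : q < n / p := by
    have hqnp : q ∣ n / p := (Nat.dvd_div_iff_mul_dvd hpn).mpr (by rwa [mul_comm] at hpqdvd ⊢)
    have hne' : q ≠ n / p := by
      intro h
      apply hne
      rw [← Nat.div_mul_cancel hpn, ← h, mul_comm]
    have hnppos : 0 < n / p := Nat.div_pos (Nat.le_of_dvd hnpos hpn) hp.pos
    exact lt_of_le_of_ne (Nat.le_of_dvd hnppos hqnp) hne'
  have hR : ∀ x : ZdVert n, ((zdGraph n)ᶜ).Reachable x pv := by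
    intro x
    by_cases hxp : x = pv
    · rw [hxp]
    by_cases hzero : (x : ZMod n) * ((p : ℕ) : ZMod n) = 0
    · -- route through qv
      have hdvd : n ∣ (x : ZMod n).val * p := by
        rw [zmod_mul_eq_zero_iff] at hzero
        rwa [ZMod.val_cast_of_lt hplt] at hzero
      obtain ⟨c, hc⟩ := hdvd
      have hx_eq : (x : ZMod n).val = (n / p) * c := by
        have h1 : (x : ZMod n).val * p = ((n / p) * c) * p := by
          rw [hc, mul_assoc, mul_comm c p, ← mul_assoc, Nat.div_mul_cancel hpn]
        exact Nat.eq_of_mul_eq_mul_right hp.pos h1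
      have hcpos : 0 < c := by
        rcases Nat.eq_zero_or_pos c with h | h
        · exfalso
          have := vert_val_pos x
          rw [hx_eq, h, mul_zero] at this
          exact Nat.lt_irrefl 0 this
        · exact h
      have hxq_ne : x ≠ qv := by
        intro h
        have hval : (x : ZMod n).val = q := by rw [h, hqv, mkVert_val]
        rw [hx_eq] at hval
        have : n / p ≤ (n / p) * c := Nat.le_mul_of_pos_right _ hcpos
        omega
      have hadj1 : ((zdGraph n)ᶜ).Adj x qv := by
        rw [SimpleGraph.compl_adj]
        refine ⟨hxq_ne, ?_⟩
        rintro ⟨-, hmul⟩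
        rw [zmod_mul_eq_zero_iff] at hmul
        rw [hqv, mkVert_val, hx_eq] at hmul
        -- n ∣ (n/p)*c*q  →  p ∣ c*q  →  p ∣ c  →  c ≥ p  →  x.val ≥ n, contra
        have hnppos : 0 < n / p := Nat.div_pos (Nat.le_of_dvd hnpos hpn) hp.pos
        have hpdvd_cq : p ∣ c * q := by
          have h1 : (n / p) * p ∣ (n / p) * (c * q) := by
            rw [Nat.div_mul_cancel hpn, ← mul_assoc]
            exact hmul
          exact (mul_dvd_mul_iff_left hnppos.ne').mp h1
        have hpc : p ∣ c := by
          rcases (Nat.Prime.dvd_mul hp).mp hpdvd_cq with h | h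
          · exact h
          · exact absurd ((Nat.prime_dvd_prime_iff_eq hp hq).mp h) hpq
        have : n ≤ (x : ZMod n).val := by
          rw [hx_eq]
          calc n = (n / p) * p := (Nat.div_mul_cancel hpn).symm
            _ ≤ (n / p) * c := Nat.mul_le_mul_left _ (Nat.le_of_dvd hcpos hpc)
        exact absurd (ZMod.val_lt (x : ZMod n)) (not_lt.mpr this)
      have hadj2 : ((zdGraph n)ᶜ).Adj qv pv := by
        rw [SimpleGraph.compl_adj]
        constructor
        · intro h
          have := congrArg (fun v : ZdVert n => ((v : ZMod n)).val) h
          simp only [hqv, hpv, mkVert_val] at this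
          exact hpq this.symm
        · rintro ⟨-, hmul⟩
          rw [zmod_mul_eq_zero_iff, hqv, hpv, mkVert_val, mkVert_val] at hmul
          have : n ≤ q * p := Nat.le_of_dvd (Nat.mul_pos hq.pos hp.pos) hmul
          rw [mul_comm] at this
          omega
      exact (hadj1.reachable).trans hadj2.reachable
    · -- directly adjacent to pv
      have hadj : ((zdGraph n)ᶜ).Adj x pv := by
        rw [SimpleGraph.compl_adj]
        exact ⟨hxp, fun h => hzero h.2⟩
      exact hadj.reachable
  rw [SimpleGraph.connected_iff]
  exact ⟨fun u v => (hR u).trans (hR v).symm, ⟨pv⟩⟩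

end Graphs


/-- For composite `n ≥ 4`, the Laplacian spectral radius of `Γ(ZMod n)` equals its
number of vertices iff `n` is a product of two distinct primes or a prime power with
`n ≠ 4`. -/
theorem lapRadius_eq_card_iff (n : ℕ) [NeZero n] (hn : 4 ≤ n) (hcomp : ¬ n.Prime) :
    lapRadius (zdGraph n) = (Fintype.card (ZdVert n) : ℝ) ↔
      ((∃ p q : ℕ, p.Prime ∧ q.Prime ∧ p ≠ q ∧ n = p * q) ∨
       ((∃ p k : ℕ, p.Prime ∧ 0 < k ∧ n = p ^ k) ∧ n ≠ 4)) := by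
  have hn1 : n ≠ 1 := by omega
  have hp := Nat.minFac_prime hn1
  have hpdvd := Nat.minFac_dvd n
  have hplt : n.minFac < n := by
    rcases lt_or_eq_of_le (Nat.le_of_dvd (by omega) hpdvd) with h | h
    · exact h
    · exact absurd (h ▸ hp) hcomp
  haveI hnev : Nonempty (ZdVert n) :=
    ⟨mkVert n.minFac hp.pos hplt (by rw [Nat.gcd_eq_left hpdvd]; exact hp.ne_one)⟩
  rw [lapRadius_eq_card_iff_not_connected]
  constructor
  · intro hdisc
    by_cases hpq : ∃ p q : ℕ, p.Prime ∧ q.Prime ∧ p ≠ q ∧ n = p * q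
    · exact Or.inl hpq
    by_cases hpp : ∃ p k : ℕ, p.Prime ∧ 0 < k ∧ n = p ^ k
    · refine Or.inr ⟨hpp, ?_⟩
      rintro rfl
      exact hdisc connected_compl_four
    · exfalso
      obtain ⟨q, hqprime, hqdvd, hqne⟩ : ∃ q, q.Prime ∧ q ∣ n ∧ q ≠ n.minFac := by
        by_contra hall
        push_neg at hall
        apply hpp
        have heq := Nat.eq_prime_pow_of_unique_prime_dvd (n := n) (p := n.minFac)
          (by omega) (fun {d} hd hdvd => hall d hd hdvd)
        refine ⟨n.minFac, n.primeFactorsList.length, hp, ?_, heq⟩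
        rcases Nat.eq_zero_or_pos n.primeFactorsList.length with h0 | h0
        · rw [h0, pow_zero] at heq; omega
        · exact h0
      apply hdisc
      exact connected_compl_general hp hqprime (Ne.symm hqne) hpdvd hqdvd
        (fun h => hpq ⟨n.minFac, q, hp, hqprime, Ne.symm hqne, h⟩)
  · rintro (⟨p, q, hpr, hqr, hnepq, hneq⟩ | ⟨⟨p, k, hpr, hkpos, hnpk⟩, h4⟩)
    · exact not_connected_compl_of_pq hpr hqr hnepq hneq
    · have hk2 : 2 ≤ k := by
        rcases Nat.lt_or_ge k 2 with h | h
        · exfalso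
          have hk1 : k = 1 := by omega
          apply hcomp
          rw [hnpk, hk1, pow_one]
          exact hpr
        · exact h
      exact not_connected_compl_of_pp hpr hk2 hnpk h4
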